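/- Let H = -Δ + V with V bounded, Γ ⊊ Z^d, and assume E_∅(H) = 0 and E_Γ := E_Γ(H) > 0. Then for every η ∈ (0, E_Γ) and t > 0 with t - η - (η/(E_Γ - η))(4d + spr(V)) > 0, one has E_Γ(H,t) ≥ η. Consequently E_Γ(H,t) ≥ E_Γ t / (t + 4d + E_Γ + spr(V)) for all t > 0. -/

import Mathlib

open scoped BigOperators

noncomputable section

/-- `ℤ^d`. -/
abbrev Zd (d : ℕ) := Fin d → ℤ

/-- `ℓ¹` distance on `ℤ^d`. -/
def dist1 {d : ℕ} (x y : Zd d) : ℕ := ∑ i, (x i - y i).natAbs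

/-- the `i`-th coordinate unit vector. -/
def unitVec {d : ℕ} (i : Fin d) : Zd d := fun j => if j = i then 1 else 0

/-- the negative discrete Laplacian: `(-Δφ)(x) = Σ_{‖x-y‖₁=1} (φ(x) - φ(y))`. -/
def negLap {d : ℕ} (φ : Zd d → ℝ) (x : Zd d) : ℝ :=
  ∑ i, ((φ x - φ (x + unitVec i)) + (φ x - φ (x - unitVec i)))

/-- characteristic function of a set. -/
def chi {d : ℕ} (A : Set (Zd d)) : Zd d → ℝ := A.indicator fun _ => 1

/-- edge boundary `∂A = {(x,y) ∈ A × Aᶜ : ‖x-y‖₁ = 1}`. -/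
def bdry {d : ℕ} (A : Set (Zd d)) : Set (Zd d × Zd d) :=
  {p | p.1 ∈ A ∧ p.2 ∉ A ∧ dist1 p.1 p.2 = 1}

/-- squared `ℓ²` norm (for finitely supported functions). -/
def norm2 {d : ℕ} (φ : Zd d → ℝ) : ℝ := ∑ᶠ x, φ x ^ 2

/-- quadratic form `⟨φ, (-Δ + V)φ⟩` (for finitely supported `φ`). -/
def energy {d : ℕ} (V : Zd d → ℝ) (φ : Zd d → ℝ) : ℝ :=
  ∑ᶠ x, φ x * (negLap φ x + V x * φ x)

/-- `V` is a bounded potential. -/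
def BddPot {d : ℕ} (V : Zd d → ℝ) : Prop := ∃ C, ∀ x, |V x| ≤ C

/-- the spread `spr(V) = sup V - inf V` of a bounded potential. -/
def spr {d : ℕ} (V : Zd d → ℝ) : ℝ := sSup (Set.range V) - sInf (Set.range V)

/-- `E_∅(H) = inf σ(-Δ + V)`, characterized variationally over normalized finitely
supported functions. -/
def E0 {d : ℕ} (V : Zd d → ℝ) : ℝ :=
  sInf {r | ∃ φ : Zd d → ℝ, (Function.support φ).Finite ∧ norm2 φ = 1 ∧ r = energy V φ}

/-- `E_Γ(H) = inf σ(H_Γ)`, the ground state energy of the `Γ`-trimmed operator,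
characterized variationally over normalized finitely supported functions vanishing on `Γ`. -/
def EG {d : ℕ} (V : Zd d → ℝ) (Γ : Set (Zd d)) : ℝ :=
  sInf {r | ∃ φ : Zd d → ℝ, (Function.support φ).Finite ∧ (∀ x ∈ Γ, φ x = 0) ∧
    norm2 φ = 1 ∧ r = energy V φ}

/-- `E_Γ(H,t) = inf σ(H + t χ_Γ)`. -/
def EGt {d : ℕ} (V : Zd d → ℝ) (Γ : Set (Zd d)) (t : ℝ) : ℝ :=
  E0 fun x => V x + t * chi Γ x

/-- the open box `Λ⁰_K(ζ) = {y : ‖y-ζ‖_∞ < K/2}`. -/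
def Lam0 {d : ℕ} (K : ℕ) (ζ : Zd d) : Set (Zd d) := {y | ∀ i, 2 * (y i - ζ i).natAbs < K}

/-- `Γ` is `(K,Q)`-relatively dense: `|Γ ∩ Λ⁰_K(ζ)| ≥ Q` for all `ζ ∈ KZ^d`. -/
def RelDense {d : ℕ} (Γ : Set (Zd d)) (K Q : ℕ) : Prop :=
  ∀ z : Zd d, Q ≤ (Γ ∩ Lam0 K fun i => (K : ℤ) * z i).ncard

/-- `K_* = K` if `K` is odd, `K+1` if `K` is even. -/
def Kstar (K : ℕ) : ℕ := if K % 2 = 1 then K else K + 1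

/-- `⟨χ_A, (-Δ)χ_A⟩` for a finite set `A`; for `A ⊆ Γᶜ` this coincides with
`⟨χ_A, (-Δ_Γ)χ_A⟩` for the `Γ`-trimmed Laplacian. -/
def qform {d : ℕ} (A : Finset (Zd d)) : ℝ := ∑ x ∈ A, negLap (chi ↑A) x

/-- Cheeger constant `β(Γ)` of the `Γ`-trimmed Laplacian. -/
def betaG {d : ℕ} (Γ : Set (Zd d)) : ℝ :=
  sInf {r | ∃ A : Finset (Zd d), A.Nonempty ∧ (↑A : Set (Zd d)) ⊆ Γᶜ ∧
    r = qform A / A.card}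

/-- `⟨χ_A, H(t)χ_A⟩ = ⟨χ_A, (-Δ)χ_A⟩ + t|A ∩ Γ|` for a finite set `A`. -/
def qformT {d : ℕ} (Γ : Set (Zd d)) (t : ℝ) (A : Finset (Zd d)) : ℝ :=
  qform A + t * ((↑A ∩ Γ : Set (Zd d)).ncard)

/-- Cheeger constant `β(t)` of `H(t) = -Δ + t χ_Γ`. -/
def betaT {d : ℕ} (Γ : Set (Zd d)) (t : ℝ) : ℝ :=
  sInf {r | ∃ A : Finset (Zd d), A.Nonempty ∧ r = qformT Γ t A / A.card}

/-- the box `Λ_L(x₀) = {y : ‖y-x₀‖_∞ ≤ L/2}`. -/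
def box {d : ℕ} (L : ℕ) (x₀ : Zd d) : Set (Zd d) := {y | ∀ i, 2 * (y i - x₀ i).natAbs ≤ L}

/-- `φ` is an eigenfunction of `H_Λ = (-Δ + V)_Λ` with eigenvalue `E`. -/
def eigOn {d : ℕ} (V : Zd d → ℝ) (Λ : Set (Zd d)) (φ : Zd d → ℝ) (E : ℝ) : Prop :=
  (∀ x ∉ Λ, φ x = 0) ∧ ∀ x ∈ Λ, negLap φ x + V x * φ x = E * φ x

/-- `E^Λ = inf σ(H_Λ)`, variationally. -/
def Ebox {d : ℕ} (V : Zd d → ℝ) (Λ : Set (Zd d)) : ℝ :=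
  sInf {r | ∃ φ : Zd d → ℝ, (∀ x ∉ Λ, φ x = 0) ∧ norm2 φ = 1 ∧ r = energy V φ}


section Stmt18Aux

open Function

variable {d : ℕ}

lemma chi_of_mem {A : Set (Zd d)} {x : Zd d} (h : x ∈ A) : chi A x = 1 := by
  simp [chi, Set.indicator_of_mem h]

lemma chi_of_not_mem {A : Set (Zd d)} {x : Zd d} (h : x ∉ A) : chi A x = 0 := by
  simp [chi, Set.indicator_of_notMem h]

lemma fs_eq (f : Zd d → ℝ) (S : Finset (Zd d)) (h : ∀ x, f x ≠ 0 → x ∈ S) :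
    ∑ᶠ x, f x = ∑ x ∈ S, f x :=
  finsum_eq_sum_of_support_subset f (fun x hx => h x hx)

lemma fs_shift (f : Zd d → ℝ) (v : Zd d) : ∑ᶠ x, f (x + v) = ∑ᶠ x, f x := by
  simpa using finsum_comp_equiv (Equiv.addRight v) (f := f)

lemma negLap_lin (f g : Zd d → ℝ) (s : ℝ) (x : Zd d) :
    negLap (fun y => f y + s * g y) x = negLap f x + s * negLap g x := by
  simp only [negLap]
  rw [Finset.mul_sum, ← Finset.sum_add_distrib]
  exact Finset.sum_congr rfl fun i _ => by ring

lemma negLap_smul (c : ℝ) (f : Zd d → ℝ) (x : Zd d) :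
    negLap (fun y => c * f y) x = c * negLap f x := by
  simp only [negLap]
  rw [Finset.mul_sum]
  exact Finset.sum_congr rfl fun i _ => by ring

/-- `Sᵢ = ∑ φ(x) φ(x+eᵢ)`. -/
def Si (φ : Zd d → ℝ) (i : Fin d) : ℝ := ∑ᶠ x, φ x * φ (x + unitVec i)

lemma norm2_nonneg (φ : Zd d → ℝ) : 0 ≤ norm2 φ :=
  finsum_nonneg fun x => sq_nonneg _

lemma norm2_eq (φ : Zd d → ℝ) (hf : (support φ).Finite) :
    norm2 φ = ∑ x ∈ hf.toFinset, φ x ^ 2 :=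
  fs_eq _ _ (fun x hx => hf.mem_toFinset.2 (fun h0 => hx (by simp only [h0]; ring)))

lemma sq_shift_expand (φ : Zd d → ℝ) (hf : (support φ).Finite) (i : Fin d) (s : ℝ) :
    ∑ᶠ x, (φ x + s * φ (x + unitVec i)) ^ 2
      = (1 + s ^ 2) * norm2 φ + 2 * s * Si φ i := by
  classical
  set e := unitVec i with he
  set T := hf.toFinset with hT
  have hmem : ∀ x, φ x ≠ 0 → x ∈ T := fun x hx => hf.mem_toFinset.2 hx
  set T' : Finset (Zd d) := T ∪ T.image (· - e) with hT'
  have hmem1 : ∀ x, φ x ≠ 0 → x ∈ T' := fun x hx => Finset.mem_union_left _ (hmem x hx)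
  have hmem2 : ∀ x, φ (x + e) ≠ 0 → x ∈ T' := by
    intro x hx
    refine Finset.mem_union_right _ (Finset.mem_image.2 ⟨x + e, hmem _ hx, ?_⟩)
    abel
  have h1 : ∑ᶠ x, (φ x + s * φ (x + e)) ^ 2 = ∑ x ∈ T', (φ x + s * φ (x + e)) ^ 2 := by
    refine fs_eq _ _ (fun x hx => ?_)
    by_cases h : φ x = 0
    · refine hmem2 x (fun h0 => hx ?_)
      simp only [h, h0]; ring
    · exact hmem1 x h
  have h2 : norm2 φ = ∑ x ∈ T', φ x ^ 2 :=
    fs_eq _ _ (fun x hx => hmem1 x (fun h0 => hx (by simp only [h0]; ring)))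
  have h3 : Si φ i = ∑ x ∈ T', φ x * φ (x + e) :=
    fs_eq _ _ (fun x hx => hmem1 x (fun h0 => hx (by simp only [h0]; ring)))
  have h4 : ∑ x ∈ T', φ (x + e) ^ 2 = norm2 φ := by
    rw [show norm2 φ = ∑ᶠ x, φ (x + e) ^ 2 from (fs_shift (fun x => φ x ^ 2) e).symm]
    exact (fs_eq _ _ (fun x hx => hmem2 x (fun h0 => hx (by simp only [h0]; ring)))).symm
  have expand : ∑ x ∈ T', (φ x + s * φ (x + e)) ^ 2
      = ∑ x ∈ T', φ x ^ 2 + s ^ 2 * ∑ x ∈ T', φ (x + e) ^ 2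
        + 2 * s * ∑ x ∈ T', φ x * φ (x + e) := by
    rw [Finset.mul_sum, Finset.mul_sum, ← Finset.sum_add_distrib, ← Finset.sum_add_distrib]
    exact Finset.sum_congr rfl fun x _ => by ring
  rw [h1, expand, ← h2, ← h3, h4]; ring

lemma lap_expand (φ : Zd d → ℝ) (hf : (support φ).Finite) (i : Fin d) :
    ∑ᶠ x, φ x * ((φ x - φ (x + unitVec i)) + (φ x - φ (x - unitVec i)))
      = 2 * norm2 φ - 2 * Si φ i := by
  classical
  set e := unitVec i with he
  set T := hf.toFinset with hT
  have hmem : ∀ x, φ x ≠ 0 → x ∈ T := fun x hx => hf.mem_toFinset.2 hx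
  have key : ∀ g : Zd d → ℝ, ∑ᶠ x, φ x * g x = ∑ x ∈ T, φ x * g x := fun g =>
    fs_eq _ _ (fun x hx => hmem x (fun h0 => hx (by simp only [h0]; ring)))
  have hminus : ∑ᶠ x, φ x * φ (x - e) = Si φ i := by
    have h := fs_shift (fun x => φ x * φ (x - e)) e
    simp only [add_sub_cancel_right] at h
    rw [← h]
    exact finsum_congr fun x => mul_comm _ _
  have h2 : norm2 φ = ∑ x ∈ T, φ x * φ x := by
    rw [norm2_eq φ hf]
    exact Finset.sum_congr rfl fun x _ => by ring
  have h3 : Si φ i = ∑ x ∈ T, φ x * φ (x + e) := key _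
  have h4 : Si φ i = ∑ x ∈ T, φ x * φ (x - e) := by rw [← hminus]; exact key _
  rw [key]
  have expand : ∑ x ∈ T, φ x * ((φ x - φ (x + e)) + (φ x - φ (x - e)))
      = 2 * ∑ x ∈ T, φ x * φ x - ∑ x ∈ T, φ x * φ (x + e) - ∑ x ∈ T, φ x * φ (x - e) := by
    rw [Finset.mul_sum, ← Finset.sum_sub_distrib, ← Finset.sum_sub_distrib]
    exact Finset.sum_congr rfl fun x _ => by ring
  rw [expand, ← h2, ← h3, ← h4]; ring

lemma lapform_eq (φ : Zd d → ℝ) (hf : (support φ).Finite) :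
    ∑ᶠ x, φ x * negLap φ x = ∑ i : Fin d, (2 * norm2 φ - 2 * Si φ i) := by
  classical
  set T := hf.toFinset with hT
  have hmem : ∀ x, φ x ≠ 0 → x ∈ T := fun x hx => hf.mem_toFinset.2 hx
  have h1 : ∑ᶠ x, φ x * negLap φ x = ∑ x ∈ T, φ x * negLap φ x :=
    fs_eq _ _ (fun x hx => hmem x (fun h0 => hx (by simp only [h0]; ring)))
  rw [h1]
  have h2 : ∀ x, φ x * negLap φ x
      = ∑ i : Fin d, φ x * ((φ x - φ (x + unitVec i)) + (φ x - φ (x - unitVec i))) := by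
    intro x; rw [negLap, Finset.mul_sum]
  rw [Finset.sum_congr rfl (fun x _ => h2 x), Finset.sum_comm]
  refine Finset.sum_congr rfl fun i _ => ?_
  rw [← lap_expand φ hf i]
  exact (fs_eq _ _ (fun x hx => hmem x (fun h0 => hx (by simp only [h0]; ring)))).symm

lemma Si_bounds (φ : Zd d → ℝ) (hf : (support φ).Finite) (i : Fin d) :
    0 ≤ 2 * norm2 φ - 2 * Si φ i ∧ 2 * norm2 φ - 2 * Si φ i ≤ 4 * norm2 φ := by
  have hm := sq_shift_expand φ hf i (-1)
  have hp := sq_shift_expand φ hf i 1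
  have h1 : (0:ℝ) ≤ ∑ᶠ x, (φ x + (-1) * φ (x + unitVec i)) ^ 2 :=
    finsum_nonneg fun x => sq_nonneg _
  have h2 : (0:ℝ) ≤ ∑ᶠ x, (φ x + 1 * φ (x + unitVec i)) ^ 2 :=
    finsum_nonneg fun x => sq_nonneg _
  rw [hm] at h1
  rw [hp] at h2
  constructor <;> nlinarith [h1, h2]

lemma lapform_nonneg (φ : Zd d → ℝ) (hf : (support φ).Finite) :
    0 ≤ ∑ᶠ x, φ x * negLap φ x := by
  rw [lapform_eq φ hf]
  exact Finset.sum_nonneg fun i _ => (Si_bounds φ hf i).1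

lemma lapform_le (φ : Zd d → ℝ) (hf : (support φ).Finite) :
    ∑ᶠ x, φ x * negLap φ x ≤ 4 * d * norm2 φ := by
  rw [lapform_eq φ hf]
  calc ∑ i : Fin d, (2 * norm2 φ - 2 * Si φ i) ≤ ∑ _i : Fin d, 4 * norm2 φ :=
        Finset.sum_le_sum fun i _ => (Si_bounds φ hf i).2
    _ = 4 * d * norm2 φ := by
        rw [Finset.sum_const, Finset.card_univ, Fintype.card_fin, nsmul_eq_mul]; ring

lemma energy_eq (V : Zd d → ℝ) (φ : Zd d → ℝ) (hf : (support φ).Finite) :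
    energy V φ = (∑ᶠ x, φ x * negLap φ x) + ∑ᶠ x, V x * φ x ^ 2 := by
  classical
  set T := hf.toFinset with hT
  have hmem : ∀ x, φ x ≠ 0 → x ∈ T := fun x hx => hf.mem_toFinset.2 hx
  rw [energy, fs_eq _ T (fun x hx => hmem x (fun h0 => hx (by simp only [h0]; ring))),
    fs_eq (fun x => φ x * negLap φ x) T (fun x hx => hmem x (fun h0 => hx (by simp only [h0]; ring))),
    fs_eq (fun x => V x * φ x ^ 2) T (fun x hx => hmem x (fun h0 => hx (by simp only [h0]; ring))),
    ← Finset.sum_add_distrib]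
  exact Finset.sum_congr rfl fun x _ => by ring

lemma pot_le {V : Zd d → ℝ} (hV : BddPot V) (φ : Zd d → ℝ) (hf : (support φ).Finite) :
    ∑ᶠ x, V x * φ x ^ 2 ≤ sSup (Set.range V) * norm2 φ := by
  obtain ⟨C, hC⟩ := hV
  have hbdd : BddAbove (Set.range V) := ⟨C, by rintro _ ⟨x, rfl⟩; exact (abs_le.1 (hC x)).2⟩
  rw [fs_eq (fun x => V x * φ x ^ 2) hf.toFinset
      (fun x hx => hf.mem_toFinset.2 (fun h0 => hx (by simp only [h0]; ring))),
    norm2_eq φ hf, Finset.mul_sum]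
  exact Finset.sum_le_sum fun x _ =>
    mul_le_mul_of_nonneg_right (le_csSup hbdd ⟨x, rfl⟩) (sq_nonneg _)

lemma pot_ge {V : Zd d → ℝ} (hV : BddPot V) (φ : Zd d → ℝ) (hf : (support φ).Finite) :
    sInf (Set.range V) * norm2 φ ≤ ∑ᶠ x, V x * φ x ^ 2 := by
  obtain ⟨C, hC⟩ := hV
  have hbdd : BddBelow (Set.range V) := ⟨-C, by rintro _ ⟨x, rfl⟩; exact (abs_le.1 (hC x)).1⟩
  rw [fs_eq (fun x => V x * φ x ^ 2) hf.toFinset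
      (fun x hx => hf.mem_toFinset.2 (fun h0 => hx (by simp only [h0]; ring))),
    norm2_eq φ hf, Finset.mul_sum]
  exact Finset.sum_le_sum fun x _ =>
    mul_le_mul_of_nonneg_right (csInf_le hbdd ⟨x, rfl⟩) (sq_nonneg _)

lemma norm2_smul (c : ℝ) (φ : Zd d → ℝ) (hf : (support φ).Finite) :
    norm2 (fun x => c * φ x) = c ^ 2 * norm2 φ := by
  rw [norm2, fs_eq (fun x => (c * φ x) ^ 2) hf.toFinset
      (fun x hx => hf.mem_toFinset.2 (fun h0 => hx (by simp only [h0]; ring))),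
    norm2_eq φ hf, Finset.mul_sum]
  exact Finset.sum_congr rfl fun x _ => by ring

lemma energy_smul (V : Zd d → ℝ) (c : ℝ) (φ : Zd d → ℝ) (hf : (support φ).Finite) :
    energy V (fun x => c * φ x) = c ^ 2 * energy V φ := by
  classical
  set T := hf.toFinset with hT
  have hmem : ∀ x, φ x ≠ 0 → x ∈ T := fun x hx => hf.mem_toFinset.2 hx
  rw [energy, energy,
    fs_eq (fun x => (c * φ x) * (negLap (fun y => c * φ y) x + V x * (c * φ x))) T
      (fun x hx => hmem x (fun h0 => hx (by simp only [h0]; ring))),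
    fs_eq (fun x => φ x * (negLap φ x + V x * φ x)) T
      (fun x hx => hmem x (fun h0 => hx (by simp only [h0]; ring))),
    Finset.mul_sum]
  refine Finset.sum_congr rfl fun x _ => ?_
  rw [negLap_smul]; ring

lemma energy_ge_inf {V : Zd d → ℝ} (hV : BddPot V) (φ : Zd d → ℝ)
    (hf : (support φ).Finite) : sInf (Set.range V) * norm2 φ ≤ energy V φ := by
  rw [energy_eq V φ hf]
  have h1 := lapform_nonneg φ hf
  have h2 := pot_ge hV φ hf
  linarith

lemma E0_le_energy {V : Zd d → ℝ} (hV : BddPot V) (φ : Zd d → ℝ)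
    (hf : (support φ).Finite) (hn : norm2 φ = 1) : E0 V ≤ energy V φ := by
  refine csInf_le ⟨sInf (Set.range V), ?_⟩ ⟨φ, hf, hn, rfl⟩
  rintro r ⟨ψ, hψf, hψn, rfl⟩
  have := energy_ge_inf hV ψ hψf
  rw [hψn, mul_one] at this
  exact this

lemma EG_le_energy {V : Zd d → ℝ} (hV : BddPot V) (Γ : Set (Zd d)) (φ : Zd d → ℝ)
    (hf : (support φ).Finite) (hΓ : ∀ x ∈ Γ, φ x = 0) (hn : norm2 φ = 1) :
    EG V Γ ≤ energy V φ := by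
  refine csInf_le ⟨sInf (Set.range V), ?_⟩ ⟨φ, hf, hΓ, hn, rfl⟩
  rintro r ⟨ψ, hψf, _, hψn, rfl⟩
  have := energy_ge_inf hV ψ hψf
  rw [hψn, mul_one] at this
  exact this

lemma norm2_zero_all {φ : Zd d → ℝ} (hf : (support φ).Finite) (h0 : norm2 φ = 0) :
    ∀ x, φ x = 0 := by
  intro x
  by_contra hx
  have hxT : x ∈ hf.toFinset := hf.mem_toFinset.2 hx
  have hpos : 0 < ∑ y ∈ hf.toFinset, φ y ^ 2 :=
    Finset.sum_pos' (fun y _ => sq_nonneg _) ⟨x, hxT, by positivity⟩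
  rw [← norm2_eq φ hf] at hpos
  linarith

lemma energy_zero_of_zero {V φ : Zd d → ℝ} (hz : ∀ x, φ x = 0) : energy V φ = 0 := by
  rw [energy, fs_eq _ (∅ : Finset (Zd d)) (fun x hx => absurd (by simp only [hz x]; ring) hx)]
  simp

lemma smul_support_finite (c : ℝ) {φ : Zd d → ℝ} (hf : (support φ).Finite) :
    (support (fun x => c * φ x)).Finite :=
  hf.subset (fun x hx => by
    simp only [mem_support] at *
    exact fun h0 => hx (by rw [h0, mul_zero]))

lemma energy_nonneg {V : Zd d → ℝ} (hV : BddPot V) (hE0 : E0 V = 0) (φ : Zd d → ℝ)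
    (hf : (support φ).Finite) : 0 ≤ energy V φ := by
  rcases eq_or_lt_of_le (norm2_nonneg φ) with h0 | hpos
  · rw [energy_zero_of_zero (norm2_zero_all hf h0.symm)]
  · set n := norm2 φ with hn
    set c := (Real.sqrt n)⁻¹ with hc
    have hc2 : c ^ 2 = n⁻¹ := by
      rw [hc, inv_pow, Real.sq_sqrt (le_of_lt hpos)]
    have hfc := smul_support_finite c hf
    have hnc : norm2 (fun x => c * φ x) = 1 := by
      rw [norm2_smul c φ hf, hc2, inv_mul_cancel₀ (ne_of_gt hpos)]
    have h1 := E0_le_energy hV _ hfc hnc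
    rw [energy_smul V c φ hf, hE0, hc2] at h1
    have h2 : 0 ≤ n * (n⁻¹ * energy V φ) := mul_nonneg hpos.le h1
    rwa [← mul_assoc, mul_inv_cancel₀ (ne_of_gt hpos), one_mul] at h2

lemma energy_ge_EG {V : Zd d → ℝ} (hV : BddPot V) (Γ : Set (Zd d)) (φ : Zd d → ℝ)
    (hf : (support φ).Finite) (hΓ : ∀ x ∈ Γ, φ x = 0) :
    EG V Γ * norm2 φ ≤ energy V φ := by
  rcases eq_or_lt_of_le (norm2_nonneg φ) with h0 | hpos
  · rw [energy_zero_of_zero (norm2_zero_all hf h0.symm), ← h0, mul_zero]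
  · set n := norm2 φ with hn
    set c := (Real.sqrt n)⁻¹ with hc
    have hc2 : c ^ 2 = n⁻¹ := by
      rw [hc, inv_pow, Real.sq_sqrt (le_of_lt hpos)]
    have hfc := smul_support_finite c hf
    have hnc : norm2 (fun x => c * φ x) = 1 := by
      rw [norm2_smul c φ hf, hc2, inv_mul_cancel₀ (ne_of_gt hpos)]
    have h1 := EG_le_energy hV Γ _ hfc (fun x hx => by rw [hΓ x hx, mul_zero]) hnc
    rw [energy_smul V c φ hf, hc2] at h1
    have h2 := mul_le_mul_of_nonneg_left h1 hpos.le
    rw [← mul_assoc, mul_inv_cancel₀ (ne_of_gt hpos), one_mul] at h2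
    linarith [h2]

lemma delta_norm : norm2 (fun x : Zd d => if x = 0 then (1:ℝ) else 0) = 1 := by
  classical
  rw [norm2, finsum_eq_single _ (0 : Zd d) (fun b hb => by simp [hb])]
  simp

lemma delta_supp : (support (fun x : Zd d => if x = 0 then (1:ℝ) else 0)).Finite := by
  classical
  refine (Set.finite_singleton (0 : Zd d)).subset (fun x hx => ?_)
  simp only [mem_support] at hx
  by_contra h
  simp only [Set.mem_singleton_iff] at h
  exact hx (by simp [h])

lemma infV_nonpos {V : Zd d → ℝ} (hV : BddPot V) (hE0 : E0 V = 0) :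
    sInf (Set.range V) ≤ 0 := by
  classical
  have h3 : sInf (Set.range V) ≤ E0 V := by
    refine le_csInf ⟨energy V _, (fun x : Zd d => if x = 0 then (1:ℝ) else 0), delta_supp,
      delta_norm, rfl⟩ ?_
    rintro r ⟨ψ, hψf, hψn, rfl⟩
    have := energy_ge_inf hV ψ hψf
    rw [hψn, mul_one] at this
    exact this
  rwa [hE0] at h3

lemma spr_nonneg {V : Zd d → ℝ} (hV : BddPot V) : 0 ≤ spr V := by
  obtain ⟨C, hC⟩ := hV
  have h := csInf_le_csSup (hb := (⟨-C, by rintro _ ⟨x, rfl⟩; exact (abs_le.1 (hC x)).1⟩ :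
      BddBelow (Set.range V)))
    (ha := (⟨C, by rintro _ ⟨x, rfl⟩; exact (abs_le.1 (hC x)).2⟩ : BddAbove (Set.range V)))
    (ne := (⟨V 0, 0, rfl⟩ : (Set.range V).Nonempty))
  rw [spr]; linarith

lemma energy_expand (V f g : Zd d → ℝ) (hff : (support f).Finite)
    (hgg : (support g).Finite) (s : ℝ) :
    energy V (fun x => f x + s * g x)
      = energy V f
        + s * (∑ᶠ x, (f x * (negLap g x + V x * g x) + g x * (negLap f x + V x * f x)))
        + s ^ 2 * energy V g := by
  classical
  set T := (hff.union hgg).toFinset with hT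
  have hmf : ∀ x, f x ≠ 0 → x ∈ T := fun x hx =>
    (Set.Finite.mem_toFinset _).2 (Or.inl hx)
  have hmg : ∀ x, g x ≠ 0 → x ∈ T := fun x hx =>
    (Set.Finite.mem_toFinset _).2 (Or.inr hx)
  have e1 : energy V (fun x => f x + s * g x)
      = ∑ x ∈ T, (f x + s * g x) * ((negLap f x + s * negLap g x) + V x * (f x + s * g x)) := by
    rw [energy, fs_eq _ T ?memh]
    · exact Finset.sum_congr rfl fun x _ => by rw [negLap_lin]
    case memh =>
      intro x hx
      by_cases h : f x = 0
      · refine hmg x (fun h0 => hx ?_)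
        simp only [h, h0]; ring
      · exact hmf x h
  have e2 : energy V f = ∑ x ∈ T, f x * (negLap f x + V x * f x) :=
    fs_eq _ T (fun x hx => hmf x (fun h0 => hx (by simp only [h0]; ring)))
  have e3 : energy V g = ∑ x ∈ T, g x * (negLap g x + V x * g x) :=
    fs_eq _ T (fun x hx => hmg x (fun h0 => hx (by simp only [h0]; ring)))
  have e4 : (∑ᶠ x, (f x * (negLap g x + V x * g x) + g x * (negLap f x + V x * f x)))
      = ∑ x ∈ T, (f x * (negLap g x + V x * g x) + g x * (negLap f x + V x * f x)) := by
    refine fs_eq _ T (fun x hx => ?_)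
    by_cases h : f x = 0
    · refine hmg x (fun h0 => hx ?_)
      simp only [h, h0]; ring
    · exact hmf x h
  rw [e1, e2, e3, e4, Finset.mul_sum, Finset.mul_sum, ← Finset.sum_add_distrib,
    ← Finset.sum_add_distrib]
  exact (Finset.sum_congr rfl fun x _ => by ring).symm

lemma energy_chi (V : Zd d → ℝ) (Γ : Set (Zd d)) (t : ℝ) (φ : Zd d → ℝ)
    (hf : (support φ).Finite) :
    energy (fun x => V x + t * chi Γ x) φ
      = energy V φ + t * norm2 (fun x => chi Γ x * φ x) := by
  classical
  set T := hf.toFinset with hT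
  have hmem : ∀ x, φ x ≠ 0 → x ∈ T := fun x hx => hf.mem_toFinset.2 hx
  rw [energy, energy, norm2,
    fs_eq (fun x => φ x * (negLap φ x + (V x + t * chi Γ x) * φ x)) T
      (fun x hx => hmem x (fun h0 => hx (by simp only [h0]; ring))),
    fs_eq (fun x => φ x * (negLap φ x + V x * φ x)) T
      (fun x hx => hmem x (fun h0 => hx (by simp only [h0]; ring))),
    fs_eq (fun x => (chi Γ x * φ x) ^ 2) T
      (fun x hx => hmem x (fun h0 => hx (by simp only [h0]; ring))),
    Finset.mul_sum, ← Finset.sum_add_distrib]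
  refine Finset.sum_congr rfl fun x _ => ?_
  by_cases hx : x ∈ Γ
  · rw [chi_of_mem hx]; ring
  · rw [chi_of_not_mem hx]; ring

lemma norm2_split (Γ : Set (Zd d)) (φ : Zd d → ℝ) (hf : (support φ).Finite) :
    norm2 (fun x => chi Γ x * φ x) + norm2 (fun x => chi Γᶜ x * φ x) = norm2 φ := by
  classical
  set T := hf.toFinset with hT
  have hmem : ∀ x, φ x ≠ 0 → x ∈ T := fun x hx => hf.mem_toFinset.2 hx
  rw [norm2, norm2,
    fs_eq (fun x => (chi Γ x * φ x) ^ 2) T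
      (fun x hx => hmem x (fun h0 => hx (by simp only [h0]; ring))),
    fs_eq (fun x => (chi Γᶜ x * φ x) ^ 2) T
      (fun x hx => hmem x (fun h0 => hx (by simp only [h0]; ring))),
    norm2_eq φ hf, ← Finset.sum_add_distrib]
  refine Finset.sum_congr rfl fun x _ => ?_
  by_cases hx : x ∈ Γ
  · rw [chi_of_mem hx, chi_of_not_mem (by simp [hx] : x ∉ Γᶜ)]; ring
  · rw [chi_of_not_mem hx, chi_of_mem (by simp [hx] : x ∈ Γᶜ)]; ring

lemma key_arith (M E η t a b q1 q2 c : ℝ) (hM : 0 ≤ M) (hη : 0 < η) (hηE : η < E)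
    (ha : 0 ≤ a) (hb : 0 ≤ b) (hab : a + b = 1) (hq1 : 0 ≤ q1) (hq1M : q1 ≤ M * a)
    (hq2 : E * b ≤ q2) (hc : c ^ 2 ≤ 4 * q2 * q1)
    (ht : 0 < t - η - η / (E - η) * M) : η ≤ q1 + q2 + c + t * a := by
  have hE : 0 < E := lt_trans hη hηE
  have he : 0 < E - η := by linarith
  have hq2n : 0 ≤ q2 := le_trans (by positivity) hq2
  set u := η / E with hu
  set v := η / (E - η) with hv
  have hu0 : 0 < u := div_pos hη hE
  have hu1 : u < 1 := (div_lt_one hE).2 hηE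
  have hv0 : 0 < v := div_pos hη he
  have huv : (1 - u) * (1 + v) = 1 := by
    rw [hu, hv]; field_simp; ring
  have huE : u * E = η := by rw [hu]; field_simp
  have ht' : 0 < t - η - v * M := by rw [hv]; linarith [ht]
  set X := (1 - u) * q2 + (1 + v) * q1 with hX
  have hXnn : 0 ≤ X := by
    have : 0 ≤ (1 - u) * q2 := mul_nonneg (by linarith) hq2n
    have : 0 ≤ (1 + v) * q1 := mul_nonneg (by linarith) hq1
    rw [hX]; linarith
  have h4 : 4 * q2 * q1 ≤ X ^ 2 := by
    rw [hX]
    nlinarith [sq_nonneg ((1 - u) * q2 - (1 + v) * q1), mul_nonneg hq2n hq1, huv]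
  have hcX : -X ≤ c := by nlinarith [sq_nonneg (c + X), h4, hc, hXnn]
  have h6 : u * (E * b) ≤ u * q2 := mul_le_mul_of_nonneg_left hq2 hu0.le
  have hEb : u * (E * b) = η * b := by rw [← huE]; ring
  have h8 : v * q1 ≤ v * (M * a) := mul_le_mul_of_nonneg_left hq1M hv0.le
  have hta : (η + v * M) * a ≤ t * a :=
    mul_le_mul_of_nonneg_right (by linarith) ha
  nlinarith [hcX, h6, hEb, h8, hta, hX]

lemma part2_arith (Mv E t : ℝ) (hM : 0 ≤ Mv) (hE : 0 < E) (ht : 0 < t) :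
    0 < E * t / (t + Mv + E) ∧ E * t / (t + Mv + E) < E ∧
      0 < t - E * t / (t + Mv + E)
          - (E * t / (t + Mv + E)) / (E - E * t / (t + Mv + E)) * Mv := by
  have hD : 0 < t + Mv + E := by linarith
  have hME : 0 < Mv + E := by linarith
  have h1 : 0 < E * t / (t + Mv + E) := div_pos (mul_pos hE ht) hD
  have h2 : E * t / (t + Mv + E) < E := by
    rw [div_lt_iff₀ hD]; nlinarith
  refine ⟨h1, h2, ?_⟩
  have h1' : E - E * t / (t + Mv + E) = E * (Mv + E) / (t + Mv + E) := by
    field_simp; ring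
  have key : t - E * t / (t + Mv + E)
      - (E * t / (t + Mv + E)) / (E - E * t / (t + Mv + E)) * Mv
      = E * t * t / ((t + Mv + E) * (Mv + E)) := by
    rw [h1']
    field_simp
    ring
  rw [key]
  positivity

lemma main_bound {V : Zd d → ℝ} (hV : BddPot V) (Γ : Set (Zd d))
    (hE0 : E0 V = 0) (hEG : 0 < EG V Γ) (η t : ℝ) (hη : 0 < η) (hηE : η < EG V Γ)
    (hcond : 0 < t - η - η / (EG V Γ - η) * (4 * d + spr V))
    (φ : Zd d → ℝ) (hf : (support φ).Finite) (hn : norm2 φ = 1) :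
    η ≤ energy (fun x => V x + t * chi Γ x) φ := by
  classical
  set φ1 : Zd d → ℝ := fun x => chi Γ x * φ x with hφ1
  set φ2 : Zd d → ℝ := fun x => chi Γᶜ x * φ x with hφ2
  have hf1 : (support φ1).Finite := hf.subset (fun x hx => by
    simp only [mem_support, hφ1] at *
    exact fun h0 => hx (by rw [h0, mul_zero]))
  have hf2 : (support φ2).Finite := hf.subset (fun x hx => by
    simp only [mem_support, hφ2] at *
    exact fun h0 => hx (by rw [h0, mul_zero]))
  set a := norm2 φ1 with hadef
  set b := norm2 φ2 with hbdef
  set q1 := energy V φ1 with hq1def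
  set q2 := energy V φ2 with hq2def
  set B := ∑ᶠ x, (φ1 x * (negLap φ2 x + V x * φ2 x) + φ2 x * (negLap φ1 x + V x * φ1 x))
    with hBdef
  have hsplit : ∀ x, φ1 x + φ2 x = φ x := fun x => by
    by_cases hx : x ∈ Γ
    · simp only [hφ1, hφ2]
      rw [chi_of_mem hx, chi_of_not_mem (show x ∉ Γᶜ by simp [hx])]; ring
    · simp only [hφ1, hφ2]
      rw [chi_of_not_mem hx, chi_of_mem (show x ∈ Γᶜ by simp [hx])]; ring
  have hexp : ∀ s : ℝ, energy V (fun x => φ1 x + s * φ2 x) = q1 + s * B + s ^ 2 * q2 :=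
    fun s => energy_expand V φ1 φ2 hf1 hf2 s
  have hEφ : energy V φ = q1 + B + q2 := by
    have h := hexp 1
    rw [show (fun x => φ1 x + 1 * φ2 x) = φ from funext (fun x => by
      rw [one_mul, hsplit x])] at h
    rw [h]; ring
  have hquad : ∀ s : ℝ, 0 ≤ q2 * (s * s) + B * s + q1 := by
    intro s
    have hfs : (support fun x => φ1 x + s * φ2 x).Finite :=
      (hf1.union hf2).subset (fun x hx => by
        simp only [mem_support] at hx
        by_cases h1 : φ1 x = 0
        · exact Or.inr (show φ2 x ≠ 0 from fun h2 => hx (by simp only [h1, h2]; ring))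
        · exact Or.inl h1)
    have h := energy_nonneg hV hE0 _ hfs
    rw [hexp s] at h
    have hring : q2 * (s * s) + B * s + q1 = q1 + s * B + s ^ 2 * q2 := by ring
    linarith [h, hring.ge]
  have hdis := discrim_le_zero hquad
  have hBsq : B ^ 2 ≤ 4 * q2 * q1 := by
    simp only [discrim] at hdis
    linarith
  have hq1 : 0 ≤ q1 := energy_nonneg hV hE0 φ1 hf1
  have hq2 : EG V Γ * b ≤ q2 :=
    energy_ge_EG hV Γ φ2 hf2 (fun x hx => by
      simp only [hφ2]
      rw [chi_of_not_mem (show x ∉ Γᶜ by simp [hx])]; ring)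
  have ha : 0 ≤ a := norm2_nonneg φ1
  have hb : 0 ≤ b := norm2_nonneg φ2
  have hab : a + b = 1 := by
    have h := norm2_split Γ φ hf
    rw [hn] at h
    exact h
  have hsup_le : sSup (Set.range V) ≤ spr V := by
    have h := infV_nonpos hV hE0
    rw [spr]; linarith
  have hq1M : q1 ≤ (4 * d + spr V) * a := by
    have h1 := lapform_le φ1 hf1
    have h2 := pot_le hV φ1 hf1
    have h3 := energy_eq V φ1 hf1
    have h4 : sSup (Set.range V) * a ≤ spr V * a := mul_le_mul_of_nonneg_right hsup_le ha
    rw [hq1def, h3]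
    nlinarith [h1, h2, h4]
  have hMnn : 0 ≤ 4 * (d : ℝ) + spr V := by
    have h1 := spr_nonneg hV
    have h2 : (0:ℝ) ≤ 4 * (d : ℝ) := by positivity
    linarith
  have htarget : energy (fun x => V x + t * chi Γ x) φ = q1 + q2 + B + t * a := by
    rw [energy_chi V Γ t φ hf, hEφ, ← hφ1, ← hadef]; ring
  rw [htarget]
  exact key_arith (4 * d + spr V) (EG V Γ) η t a b q1 q2 B hMnn hη hηE ha hb hab hq1
    hq1M hq2 hBsq hcond

end Stmt18Aux

/-- Schur complement estimate: if `E_∅(H) = 0` and `E_Γ = E_Γ(H) > 0`,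
then `E_Γ(H,t) ≥ η` whenever `0 < η < E_Γ` and `t - η - (η/(E_Γ-η))(4d + spr V) > 0`;
consequently `E_Γ(H,t) ≥ E_Γ t/(t + 4d + E_Γ + spr V)` for all `t > 0`. -/
theorem stmt18 (d : ℕ) (hd : 0 < d) (V : Zd d → ℝ) (hV : BddPot V)
    (Γ : Set (Zd d)) (hne : Γ ≠ Set.univ)
    (hE0 : E0 V = 0) (hEG : 0 < EG V Γ) :
    (∀ η : ℝ, 0 < η → η < EG V Γ → ∀ t : ℝ, 0 < t →
      0 < t - η - η / (EG V Γ - η) * (4 * d + spr V) → η ≤ EGt V Γ t) ∧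
    ∀ t : ℝ, 0 < t → EG V Γ * t / (t + 4 * d + EG V Γ + spr V) ≤ EGt V Γ t := by
  classical
  have hMnn : 0 ≤ 4 * (d : ℝ) + spr V := by
    have h1 := spr_nonneg hV
    have h2 : (0:ℝ) ≤ 4 * (d : ℝ) := by positivity
    linarith
  have part1 : ∀ η : ℝ, 0 < η → η < EG V Γ → ∀ t : ℝ, 0 < t →
      0 < t - η - η / (EG V Γ - η) * (4 * d + spr V) → η ≤ EGt V Γ t := by
    intro η hη hηE t ht hcond
    unfold EGt E0
    refine le_csInf ⟨energy (fun x => V x + t * chi Γ x)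
      (fun x : Zd d => if x = 0 then (1:ℝ) else 0),
      (fun x : Zd d => if x = 0 then (1:ℝ) else 0), delta_supp, delta_norm, rfl⟩ ?_
    rintro r ⟨φ, hf, hn, rfl⟩
    exact main_bound hV Γ hE0 hEG η t hη hηE hcond φ hf hn
  refine ⟨part1, ?_⟩
  intro t ht
  obtain ⟨h1, h2, h3⟩ := part2_arith (4 * (d:ℝ) + spr V) (EG V Γ) t hMnn hEG ht
  have hden : t + (4 * (d:ℝ) + spr V) + EG V Γ = t + 4 * (d:ℝ) + EG V Γ + spr V := by
    ring
  rw [hden] at h1 h2 h3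
  exact part1 _ h1 h2 t ht h3
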